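/- Let G', α, β be the graph and colorings constructed from a graph G on n vertices and an integer t ≥ 1, and let k = n + t + 1. If there exists a k-recoloring sequence for G' from α to β of length at most 2t + 2t², then G has an independent set of size at least t − 1. -/

import Mathlib

/-- A `k`-coloring of `G`: colors in `{1,…,k}`, adjacent vertices differently colored. -/
def IsKColoring {V : Type*} (G : SimpleGraph V) (k : ℕ) (γ : V → ℕ) : Prop :=
  (∀ v, γ v ∈ Finset.Icc 1 k) ∧ ∀ u v, G.Adj u v → γ u ≠ γ v

/-- A `k`-recoloring sequence `seq 0, …, seq ℓ` from `α` to `β`: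
all are `k`-colorings, and consecutive colorings differ on at most one vertex. -/
def IsRecolSeq {V : Type*} (G : SimpleGraph V) (k : ℕ) (seq : ℕ → V → ℕ)
    (ℓ : ℕ) (α β : V → ℕ) : Prop :=
  seq 0 = α ∧ seq ℓ = β ∧ (∀ i ≤ ℓ, IsKColoring G k (seq i)) ∧
  ∀ i < ℓ, ∀ u w, seq i u ≠ seq (i+1) u → seq i w ≠ seq (i+1) w → u = w

/-- The graph `B_k`: vertices `b^i_j` for `i,j ∈ {1,…,k}`, with `b^i_j ~ b^{i'}_{j'}`
iff `i ≠ i'` and `j ≠ j'` (the complement of `K_k □ K_k`). -/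
def Bgraph (k : ℕ) : SimpleGraph (Fin k × Fin k) where
  Adj p q := p.1 ≠ q.1 ∧ p.2 ≠ q.2
  symm := ⟨fun p q h => ⟨h.1.symm, h.2.symm⟩⟩
  loopless := ⟨fun p h => h.1 rfl⟩

/-- The coloring `α^k` of `B_k`: `α^k(b^i_j) = i`. -/
def alphak (k : ℕ) : Fin k × Fin k → ℕ := fun p => p.1.val + 1

/-- The coloring `β^k` of `B_k`: `β^k(b^i_j) = j`. -/
def betak (k : ℕ) : Fin k × Fin k → ℕ := fun p => p.2.val + 1

/-- Vertices of the graph `G'` of the W[1]-hardness construction: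
`g i` are the vertices `g_1,…,g_n` (copies of `v_1,…,v_n`), `b i j` are the vertices of
`V_B = {b^i_j : i,j ∈ {1,…,t}}`, and `c m s` is the `s`-th vertex of the color-guard set
`C_{m+1}` (each of the `n+t+1` sets `C_1,…,C_{n+t+1}` has `2t + 2t²` vertices). -/
inductive GV (n t : ℕ) : Type
  | g : Fin n → GV n t
  | b : Fin t → Fin t → GV n t
  | c : Fin (n + t + 1) → Fin (2 * t + 2 * t ^ 2) → GV n t
deriving DecidableEq

/-- The graph `G'` of the W[1]-hardness construction, built from `G`. -/
def Wgraph (n t : ℕ) (G : SimpleGraph (Fin n)) : SimpleGraph (GV n t) where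
  Adj w w' :=
    match w, w' with
    | .g p, .g q => G.Adj p q
    | .g _, .b _ _ => True
    | .b _ _, .g _ => True
    | .b i j, .b i' j' => i ≠ i' ∧ j ≠ j'
    | .g i, .c m _ => m.val ≠ i.val ∧ m.val ≠ n + t
    | .c m _, .g i => m.val ≠ i.val ∧ m.val ≠ n + t
    | .b _ _, .c m _ => m.val = n + t
    | .c m _, .b _ _ => m.val = n + t
    | .c _ _, .c _ _ => False
  symm := by
    constructor
    rintro (p | ⟨i, j⟩ | ⟨m, s⟩) (q | ⟨i', j'⟩ | ⟨m', s'⟩) h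
    · exact G.adj_symm h
    · trivial
    · exact h
    · trivial
    · exact ⟨fun e => h.1 e.symm, fun e => h.2 e.symm⟩
    · exact h
    · exact h
    · exact h
    · exact h
  loopless := by
    constructor
    rintro (p | ⟨i, j⟩ | ⟨m, s⟩) h
    · exact G.irrefl h
    · exact h.1 rfl
    · exact h

/-- The `(n+t+1)`-coloring `α` of `G'`: `α(g_i) = i`, `α(c) = i` for `c ∈ C_i`,
`α(b^i_j) = n + i`. -/
def Walpha (n t : ℕ) : GV n t → ℕ
  | .g i => i.val + 1
  | .b i _ => n + i.val + 1
  | .c m _ => m.val + 1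

/-- The `(n+t+1)`-coloring `β` of `G'`: agrees with `α` on `V_G ∪ V_C`, and
`β(b^i_j) = n + j`. -/
def Wbeta (n t : ℕ) : GV n t → ℕ
  | .g i => i.val + 1
  | .b _ j => n + j.val + 1
  | .c m _ => m.val + 1


open scoped Classical

namespace Stmt8Aux

def Proper (t : ℕ) (f : Fin t × Fin t → ℕ) : Prop :=
  ∀ p q : Fin t × Fin t, p.1 ≠ q.1 → p.2 ≠ q.2 → f p ≠ f q

def ColCom (t : ℕ) (f : Fin t × Fin t → ℕ) (c : ℕ) : Prop :=
  ∃ p q : Fin t × Fin t, p ≠ q ∧ p.1 = q.1 ∧ f p = c ∧ f q = c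

noncomputable def Acc (n t : ℕ) (f : Fin t × Fin t → ℕ) : Finset ℕ :=
  (Finset.Icc 1 (n + t)).filter (ColCom t f)

noncomputable def Ucc (n t : ℕ) (f : Fin t × Fin t → ℕ) : Finset ℕ :=
  (Finset.Icc 1 (n + t)).filter (fun c => (∃ p, f p = c) ∧ ¬ ColCom t f c)

noncomputable def Lows (n t : ℕ) (f : Fin t × Fin t → ℕ) : Finset ℕ :=
  (Finset.Icc 1 n).filter (fun c => ∃ p, f p = c)

lemma sameline {t : ℕ} {f : Fin t × Fin t → ℕ} (hf : Proper t f) {p q : Fin t × Fin t}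
    (h : f p = f q) : p.1 = q.1 ∨ p.2 = q.2 := by
  by_contra hcon
  push_neg at hcon
  exact hf p q hcon.1 hcon.2 h

lemma AU_disj {n t : ℕ} (f : Fin t × Fin t → ℕ) : Disjoint (Acc n t f) (Ucc n t f) := by
  rw [Finset.disjoint_left]
  intro c hc hc'
  rw [Acc, Finset.mem_filter] at hc
  rw [Ucc, Finset.mem_filter] at hc'
  exact hc'.2.2 hc.2

lemma AU_use {n t : ℕ} {f : Fin t × Fin t → ℕ} {c : ℕ} (hc : c ∈ Acc n t f ∪ Ucc n t f) :
    (∃ p, f p = c) ∧ c ∈ Finset.Icc 1 (n + t) := by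
  rcases Finset.mem_union.1 hc with h | h
  · rw [Acc, Finset.mem_filter] at h
    obtain ⟨p, q, _, _, hp, _⟩ := h.2
    exact ⟨⟨p, hp⟩, h.1⟩
  · rw [Ucc, Finset.mem_filter] at h
    exact ⟨h.2.1, h.1⟩

lemma count_lemma {n t : ℕ} (f : Fin t × Fin t → ℕ) :
    (Acc n t f).card + (Ucc n t f).card ≤ t + (Lows n t f).card := by
  rw [← Finset.card_union_of_disjoint (AU_disj f)]
  have hsub : Acc n t f ∪ Ucc n t f ⊆ Lows n t f ∪ Finset.Icc (n+1) (n+t) := by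
    intro c hc
    obtain ⟨huse, hIcc⟩ := AU_use hc
    rw [Finset.mem_Icc] at hIcc
    rcases le_or_gt c n with h | h
    · exact Finset.mem_union_left _
        (Finset.mem_filter.2 ⟨Finset.mem_Icc.2 ⟨hIcc.1, h⟩, huse⟩)
    · exact Finset.mem_union_right _ (Finset.mem_Icc.2 ⟨h, hIcc.2⟩)
  calc (Acc n t f ∪ Ucc n t f).card
      ≤ (Lows n t f ∪ Finset.Icc (n+1) (n+t)).card := Finset.card_le_card hsub
    _ ≤ (Lows n t f).card + (Finset.Icc (n+1) (n+t)).card := Finset.card_union_le _ _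
    _ = (Lows n t f).card + t := by rw [Nat.card_Icc]; omega
    _ = t + (Lows n t f).card := by omega

lemma local_step {n t : ℕ} (ht : 2 ≤ t) (f g : Fin t × Fin t → ℕ) (v : Fin t × Fin t)
    (hfg : ∀ p, p ≠ v → g p = f p)
    (hpf : Proper t f) (hpg : Proper t g)
    (hrf : ∀ p, f p ∈ Finset.Icc 1 (n + t)) (hrg : ∀ p, g p ∈ Finset.Icc 1 (n + t))
    (hlf : (Lows n t f).card ≤ t - 2) (hlg : (Lows n t g).card ≤ t - 2)
    (hA : t ≤ (Acc n t f).card) : t ≤ (Acc n t g).card := by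
  by_cases hxy : g v = f v
  · have hgf : g = f := funext fun p => by
      by_cases hp : p = v
      · rw [hp]; exact hxy
      · exact hfg p hp
    rw [hgf]; exact hA
  set x := f v with hxdef
  set y := g v with hydef
  -- O1: committed colors other than x stay committed
  have O1 : ∀ c, c ≠ x → ColCom t f c → ColCom t g c := by
    rintro c hc ⟨p, q, hpq, h1, h2, h3⟩
    have hpv : p ≠ v := fun h => hc (by rw [← h2, h])
    have hqv : q ≠ v := fun h => hc (by rw [← h3, h])
    exact ⟨p, q, hpq, h1, by rw [hfg p hpv]; exact h2, by rw [hfg q hqv]; exact h3⟩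
  by_cases hgx : (¬ ColCom t f x) ∨ ColCom t g x
  · have hsub : Acc n t f ⊆ Acc n t g := by
      intro c hc
      rw [Acc, Finset.mem_filter] at hc ⊢
      refine ⟨hc.1, ?_⟩
      by_cases hcx : c = x
      · subst hcx
        rcases hgx with h | h
        · exact absurd hc.2 h
        · exact h
      · exact O1 c hcx hc.2
    exact le_trans hA (Finset.card_le_card hsub)
  push_neg at hgx
  obtain ⟨hfx, hgxn⟩ := hgx
  -- extract the 2-cell structure of x's class
  obtain ⟨p₀, q₀, hpq₀, hcol₀, hfp₀, hfq₀⟩ := hfx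
  have hvmem : p₀ = v ∨ q₀ = v := by
    by_contra hcon
    push_neg at hcon
    exact hgxn ⟨p₀, q₀, hpq₀, hcol₀, by rw [hfg _ hcon.1]; exact hfp₀,
      by rw [hfg _ hcon.2]; exact hfq₀⟩
  obtain ⟨w, hwv, hw1, hwx⟩ : ∃ w : Fin t × Fin t, w ≠ v ∧ w.1 = v.1 ∧ f w = x := by
    rcases hvmem with h | h
    · exact ⟨q₀, fun hh => hpq₀ (h.trans hh.symm), by rw [← h]; exact hcol₀.symm,  hfq₀⟩
    · exact ⟨p₀, fun hh => hpq₀ (hh.trans h.symm), by rw [← h]; exact hcol₀, hfp₀⟩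
  have hw2 : w.2 ≠ v.2 := fun h => hwv (Prod.ext hw1 h)
  have hclass : ∀ u, f u = x → u = v ∨ u = w := by
    intro u hu
    by_contra hcon
    push_neg at hcon
    obtain ⟨huv, huw⟩ := hcon
    have hcolg : u.1 = v.1 → False := by
      intro h1
      exact hgxn ⟨u, w, huw, h1.trans hw1.symm, by rw [hfg u huv]; exact hu,
        by rw [hfg w hwv]; exact hwx⟩
    rcases sameline hpf (hu.trans hxdef) with h1 | h1
    · exact hcolg h1
    · rcases sameline hpf (hu.trans hwx.symm) with h2 | h2
      · exact hcolg (h2.trans hw1)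
      · exact hwv (Prod.ext (hw1.trans rfl) (h2.symm.trans h1) ▸ rfl)
  have hxIcc : x ∈ Finset.Icc 1 (n + t) := by rw [hxdef]; exact hrf v
  have hxAcc : x ∈ Acc n t f := Finset.mem_filter.2 ⟨hxIcc, ⟨v, w, fun h => hwv h.symm, hw1.symm, rfl, hwx⟩⟩
  by_cases hA1 : t + 1 ≤ (Acc n t f).card
  · have hsub : (Acc n t f).erase x ⊆ Acc n t g := by
      intro c hc
      obtain ⟨hcx, hc⟩ := Finset.mem_erase.1 hc
      rw [Acc, Finset.mem_filter] at hc ⊢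
      exact ⟨hc.1, O1 c hcx hc.2⟩
    have := Finset.card_le_card hsub
    rw [Finset.card_erase_of_mem hxAcc] at this
    omega
  have hAt : (Acc n t f).card = t := by omega
  -- the committed column of each committed color
  have hcolEx : ∀ c ∈ Acc n t f, ∃ i : Fin t, ∀ u, f u = c → u.1 = i := by
    intro c hc
    rw [Acc, Finset.mem_filter] at hc
    obtain ⟨p, q, hpq, hcol, hfp, hfq⟩ := hc.2
    refine ⟨p.1, fun u hu => ?_⟩
    by_cases hup : u = p
    · rw [hup]
    by_cases huq : u = q
    · rw [huq, ← hcol]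
    rcases sameline hpf (hu.trans hfp.symm) with h1 | h1
    · exact h1
    rcases sameline hpf (hu.trans hfq.symm) with h2 | h2
    · exact h2.trans hcol.symm
    · exact absurd (Prod.ext hcol (h1.symm.trans h2)) hpq
  set colOf : ℕ → Fin t := fun c =>
    if h : ∃ i : Fin t, ∀ u, f u = c → u.1 = i then h.choose else ⟨0, by omega⟩ with hcolOfdef
  have hcolOf : ∀ c ∈ Acc n t f, ∀ u, f u = c → u.1 = colOf c := by
    intro c hc u hu
    have h := hcolEx c hc
    rw [hcolOfdef]
    simp only [dif_pos h]
    exact h.choose_spec u hu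
  -- cardinality of Ucc
  have hUle : (Ucc n t f).card ≤ t - 2 := by
    have := count_lemma (n := n) (t := t) f
    omega
  -- every column hosts a committed color
  have hsurj : ∀ i : Fin t, ∃ c ∈ Acc n t f, colOf c = i := by
    intro i
    by_contra hcon
    push_neg at hcon
    have hmem : ∀ r : Fin t, f (i, r) ∈ Ucc n t f := by
      intro r
      refine Finset.mem_filter.2 ⟨hrf _, ⟨(i, r), rfl⟩, fun hcom => ?_⟩
      have hc : f (i, r) ∈ Acc n t f := Finset.mem_filter.2 ⟨hrf _, hcom⟩
      exact hcon _ hc (hcolOf _ hc (i, r) rfl).symm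
    have hinj : Set.InjOn (fun r : Fin t => f (i, r)) ↑(Finset.univ : Finset (Fin t)) := by
      intro r _ r' _ hrr
      by_contra hne
      have hcom : ColCom t f (f (i, r)) :=
        ⟨(i, r), (i, r'), fun h => hne (congrArg Prod.snd h), rfl, rfl, hrr.symm⟩
      exact (Finset.mem_filter.1 (hmem r)).2.2 hcom
    have := Finset.card_le_card_of_injOn _ (fun r _ => hmem r) hinj
    rw [Finset.card_univ, Fintype.card_fin] at this
    omega
  -- the fiber over column v.1 is exactly {x}
  have himg : (Acc n t f).image colOf = Finset.univ := by
    apply Finset.eq_univ_of_forall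
    intro i
    obtain ⟨c, hc, hcc⟩ := hsurj i
    exact Finset.mem_image.2 ⟨c, hc, hcc⟩
  have hinjOn : Set.InjOn colOf ↑(Acc n t f) := by
    rw [← Finset.card_image_iff, himg, Finset.card_univ, Fintype.card_fin, hAt]
  have hcolx : colOf x = v.1 := (hcolOf x hxAcc v rfl).symm
  have fiberx : ∀ c ∈ Acc n t f, colOf c = v.1 → c = x := by
    intro c hc h
    exact hinjOn (Finset.mem_coe.2 hc) (Finset.mem_coe.2 hxAcc) (h.trans hcolx.symm)
  -- the t-2 rows of column v.1 other than v.2, w.2 inject into Ucc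
  set D : Finset (Fin t) := (Finset.univ.erase v.2).erase w.2 with hDdef
  have hDcard : D.card = t - 2 := by
    have hmemw : w.2 ∈ Finset.univ.erase v.2 := Finset.mem_erase.2 ⟨hw2, Finset.mem_univ _⟩
    rw [hDdef, Finset.card_erase_of_mem hmemw, Finset.card_erase_of_mem (Finset.mem_univ _),
      Finset.card_univ, Fintype.card_fin]
    omega
  have hDmem : ∀ r ∈ D, r ≠ w.2 ∧ r ≠ v.2 := by
    intro r hr
    rw [hDdef] at hr
    obtain ⟨h1, h2⟩ := Finset.mem_erase.1 hr
    exact ⟨h1, (Finset.mem_erase.1 h2).1⟩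
  have hψ : ∀ r ∈ D, f (v.1, r) ∈ Ucc n t f := by
    intro r hr
    obtain ⟨hr1, hr2⟩ := hDmem r hr
    refine Finset.mem_filter.2 ⟨hrf _, ⟨_, rfl⟩, fun hcom => ?_⟩
    have hc : f (v.1, r) ∈ Acc n t f := Finset.mem_filter.2 ⟨hrf _, hcom⟩
    have h2 : f (v.1, r) = x := fiberx _ hc (hcolOf _ hc (v.1, r) rfl).symm
    rcases hclass _ h2 with h | h
    · exact hr2 (congrArg Prod.snd h)
    · exact hr1 (congrArg Prod.snd h)
  have hψinj : Set.InjOn (fun r => f (v.1, r)) ↑D := by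
    intro r hr r' _ heq
    by_contra hne
    have hcom : ColCom t f (f (v.1, r)) :=
      ⟨(v.1, r), (v.1, r'), fun h => hne (congrArg Prod.snd h), rfl, rfl, heq.symm⟩
    exact (Finset.mem_filter.1 (hψ r (Finset.mem_coe.1 hr))).2.2 hcom
  have hUge : t - 2 ≤ (Ucc n t f).card := by
    have := Finset.card_le_card_of_injOn _ (fun r hr => hψ r hr) hψinj
    rwa [hDcard] at this
  have hUcard : (Ucc n t f).card = t - 2 := le_antisymm hUle hUge
  have hLf : t - 2 ≤ (Lows n t f).card := by
    have := count_lemma (n := n) (t := t) f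
    omega
  have hUsurj : ∀ c ∈ Ucc n t f, ∃ r ∈ D, f (v.1, r) = c := by
    have himg2 : D.image (fun r => f (v.1, r)) = Ucc n t f := by
      apply Finset.eq_of_subset_of_card_le
      · intro c hc
        obtain ⟨r, hr, rfl⟩ := Finset.mem_image.1 hc
        exact hψ r hr
      · rw [Finset.card_image_of_injOn hψinj, hDcard, hUcard]
    intro c hc
    rw [← himg2] at hc
    exact Finset.mem_image.1 hc
  -- final case analysis on y
  by_cases hgy : ColCom t g y
  · -- y becomes committed: CC stays at least t
    have hyf : ¬ ColCom t f y := by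
      intro hfy
      have hyAcc : y ∈ Acc n t f := Finset.mem_filter.2 ⟨by rw [hydef]; exact hrg v, hfy⟩
      obtain ⟨p, q, hpq, hcol, hfp, hfq⟩ := hfy
      have hpv : p ≠ v := fun h => hxy (by rw [hxdef, ← h]; exact hfp.symm)
      have hqv : q ≠ v := fun h => hxy (by rw [hxdef, ← h]; exact hfq.symm)
      have hp1 : p.1 = v.1 ∨ p.2 = v.2 :=
        sameline hpg (show g p = g v by rw [hfg p hpv, hfp, hydef])
      have hq1 : q.1 = v.1 ∨ q.2 = v.2 :=
        sameline hpg (show g q = g v by rw [hfg q hqv, hfq, hydef])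
      have hcolm : p.1 = v.1 → False := by
        intro h
        have : colOf y = v.1 := by rw [← hcolOf y hyAcc p hfp]; exact h
        exact hxy (fiberx y hyAcc this)
      rcases hp1 with h | h
      · exact hcolm h
      rcases hq1 with h' | h'
      · exact hcolm (hcol.trans h')
      · exact hpq (Prod.ext hcol (h.trans h'.symm))
    have hins : insert y ((Acc n t f).erase x) ⊆ Acc n t g := by
      intro c hc
      rcases Finset.mem_insert.1 hc with rfl | hc
      · exact Finset.mem_filter.2 ⟨by rw [hydef]; exact hrg v, hgy⟩
      · obtain ⟨hcx, hc⟩ := Finset.mem_erase.1 hc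
        rw [Acc, Finset.mem_filter] at hc
        exact Finset.mem_filter.2 ⟨hc.1, O1 c hcx hc.2⟩
    have hcard : t ≤ (insert y ((Acc n t f).erase x)).card := by
      rw [Finset.card_insert_of_notMem, Finset.card_erase_of_mem hxAcc, hAt]
      · omega
      · intro hmem
        exact hyf (Finset.mem_filter.1 (Finset.mem_erase.1 hmem).2).2
    exact le_trans hcard (Finset.card_le_card hins)
  · exfalso
    have hC1 : ∀ p, f p = y → p.2 = v.2 := by
      intro p hp
      have hpv : p ≠ v := fun h => hxy (by rw [hxdef, ← h]; exact hp.symm)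
      rcases sameline hpg (show g p = g v by rw [hfg p hpv, hp, hydef]) with h | h
      · exact absurd ⟨p, v, hpv, h, by rw [hfg p hpv]; exact hp, hydef.symm⟩ hgy
      · exact h
    by_cases hyuse : ∃ p, f p = y
    · have hyU : y ∈ Ucc n t f := by
        refine Finset.mem_filter.2 ⟨by rw [hydef]; exact hrg v, hyuse, fun hfy => ?_⟩
        obtain ⟨p, q, hpq, hcol, hfp, hfq⟩ := hfy
        have hpv : p ≠ v := fun h => hxy (by rw [hxdef, ← h]; exact hfp.symm)
        have hqv : q ≠ v := fun h => hxy (by rw [hxdef, ← h]; exact hfq.symm)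
        exact hgy ⟨p, q, hpq, hcol, by rw [hfg p hpv]; exact hfp, by rw [hfg q hqv]; exact hfq⟩
      obtain ⟨r, hr, hry⟩ := hUsurj y hyU
      exact (hDmem r hr).2 (hC1 (v.1, r) hry)
    · push_neg at hyuse
      have hyIcc : y ∈ Finset.Icc 1 (n + t) := by rw [hydef]; exact hrg v
      rw [Finset.mem_Icc] at hyIcc
      rcases le_or_gt y n with hylow | hyhigh
      · -- y is a fresh low color: lows grow to t-1 in g
        have h1 : Lows n t f ⊆ Lows n t g := by
          intro c hc
          rw [Lows, Finset.mem_filter] at hc ⊢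
          obtain ⟨hcI, p, hp⟩ := hc
          refine ⟨hcI, ?_⟩
          by_cases hpv : p = v
          · refine ⟨w, ?_⟩
            rw [hfg w hwv, hwx, hxdef, ← hpv, hp]
          · exact ⟨p, by rw [hfg p hpv, hp]⟩
        have h2 : y ∈ Lows n t g :=
          Finset.mem_filter.2 ⟨Finset.mem_Icc.2 ⟨hyIcc.1, hylow⟩, v, hydef.symm⟩
        have h3 : y ∉ Lows n t f := by
          intro hmem
          obtain ⟨p, hp⟩ := (Finset.mem_filter.1 hmem).2
          exact hyuse p hp
        have := Finset.card_le_card (Finset.insert_subset h2 h1)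
        rw [Finset.card_insert_of_notMem h3] at this
        omega
      · -- y is an unused high color: too few colors in use
        have hAU := Finset.card_union_of_disjoint (AU_disj (n := n) (t := t) f)
        have hsub2 : Acc n t f ∪ Ucc n t f ⊆
            Lows n t f ∪ ((Finset.Icc (n+1) (n+t)).erase y) := by
          intro c hc
          obtain ⟨huse, hIcc⟩ := AU_use hc
          rw [Finset.mem_Icc] at hIcc
          have hcy : c ≠ y := by
            rintro rfl
            obtain ⟨p, hp⟩ := huse
            exact hyuse p hp
          rcases le_or_gt c n with h | h
          · exact Finset.mem_union_left _
              (Finset.mem_filter.2 ⟨Finset.mem_Icc.2 ⟨hIcc.1, h⟩, huse⟩)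
          · exact Finset.mem_union_right _
              (Finset.mem_erase.2 ⟨hcy, Finset.mem_Icc.2 ⟨h, hIcc.2⟩⟩)
        have h1 := Finset.card_le_card hsub2
        have h2 := Finset.card_union_le (Lows n t f) ((Finset.Icc (n+1) (n+t)).erase y)
        have h3 : ((Finset.Icc (n+1) (n+t)).erase y).card = t - 1 := by
          rw [Finset.card_erase_of_mem (Finset.mem_Icc.2 ⟨hyhigh, hyIcc.2⟩), Nat.card_Icc]
          omega
        rw [hAU] at h1
        omega

lemma key_lemma {n t : ℕ} (ht : 2 ≤ t) (L : ℕ) (γ : ℕ → Fin t × Fin t → ℕ)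
    (hp : ∀ i ≤ L, Proper t (γ i))
    (hr : ∀ i ≤ L, ∀ p, γ i p ∈ Finset.Icc 1 (n + t))
    (hst : ∀ i < L, ∀ p q : Fin t × Fin t, γ i p ≠ γ (i+1) p → γ i q ≠ γ (i+1) q → p = q)
    (h0 : ∀ p : Fin t × Fin t, γ 0 p = n + p.1.val + 1)
    (hL : ∀ p : Fin t × Fin t, γ L p = n + p.2.val + 1) :
    ∃ i ≤ L, t - 1 ≤ (Lows n t (γ i)).card := by
  by_contra hcon
  push_neg at hcon
  have hlow : ∀ i ≤ L, (Lows n t (γ i)).card ≤ t - 2 := by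
    intro i hi
    have := hcon i hi
    omega
  have hind : ∀ i, i ≤ L → t ≤ (Acc n t (γ i)).card := by
    intro i
    induction i with
    | zero =>
      intro _
      have hmem : ∀ d : Fin t, (n + d.val + 1) ∈ Acc n t (γ 0) := by
        intro d
        have hd := d.isLt
        refine Finset.mem_filter.2 ⟨Finset.mem_Icc.2 ⟨by omega, by omega⟩, ?_⟩
        refine ⟨(d, ⟨0, by omega⟩), (d, ⟨1, by omega⟩), ?_, rfl, h0 _, h0 _⟩
        intro hcontra
        have := congrArg Prod.snd hcontra
        simp only [] at this
        have : (0 : ℕ) = 1 := congrArg Fin.val this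
        omega
      have hinj : Set.InjOn (fun d : Fin t => n + d.val + 1)
          ↑(Finset.univ : Finset (Fin t)) := by
        intro a _ b _ h
        have h' : n + a.val + 1 = n + b.val + 1 := h
        exact Fin.ext (by omega)
      have := Finset.card_le_card_of_injOn _ (fun d _ => hmem d) hinj
      rwa [Finset.card_univ, Fintype.card_fin] at this
    | succ k ih =>
      intro hk
      have hkL : k < L := hk
      have hk' : k ≤ L := le_of_lt hkL
      have hAk := ih hk'
      by_cases hch : ∀ p, γ (k+1) p = γ k p
      · have hfun : γ (k+1) = γ k := funext hch
        rw [hfun]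
        exact hAk
      · push_neg at hch
        obtain ⟨v, hv⟩ := hch
        have hfg : ∀ p, p ≠ v → γ (k+1) p = γ k p := by
          intro p hpv
          by_contra hne
          exact hpv (hst k hkL p v (fun h => hne h.symm) (fun h => hv h.symm))
        exact local_step ht (γ k) (γ (k+1)) v hfg (hp k hk') (hp (k+1) hk)
          (hr k hk') (hr (k+1) hk) (hlow k hk') (hlow (k+1) hk) hAk
  have hLA := hind L le_rfl
  have hempty : Acc n t (γ L) = ∅ := by
    rw [Finset.eq_empty_iff_forall_notMem]
    intro c hc
    obtain ⟨p, q, hpq, hcol, hfp, hfq⟩ := (Finset.mem_filter.1 hc).2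
    rw [hL p] at hfp
    rw [hL q] at hfq
    have h2 : p.2 = q.2 := Fin.ext (by omega)
    exact hpq (Prod.ext hcol h2)
  rw [hempty, Finset.card_empty] at hLA
  omega

end Stmt8Aux


/-- If there is an `(n+t+1)`-recoloring sequence for `G'` from `α` to `β` of
length at most `2t + 2t²`, then `G` has an independent set of size at least `t - 1`. -/
theorem stmt_8 (n t : ℕ) (ht : 1 ≤ t) (G : SimpleGraph (Fin n))
    (ℓ : ℕ) (hℓ : ℓ ≤ 2 * t + 2 * t ^ 2) (seq : ℕ → GV n t → ℕ)
    (hseq : IsRecolSeq (Wgraph n t G) (n + t + 1) seq ℓ (Walpha n t) (Wbeta n t)) :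
    ∃ S : Finset (Fin n), t - 1 ≤ S.card ∧ ∀ u ∈ S, ∀ v ∈ S, ¬ G.Adj u v := by
  classical
  obtain ⟨h0, hLfin, hcol, hstep⟩ := hseq
  by_cases ht2 : 2 ≤ t
  swap
  · exact ⟨∅, by simp; omega, by simp⟩
  -- a helper: if a vertex's color differs from its initial color, some step changed it
  have hfd : ∀ (u : GV n t) (i : ℕ), seq i u ≠ seq 0 u →
      ∃ j, j < i ∧ seq j u ≠ seq (j+1) u := by
    intro u i
    induction i with
    | zero => intro h; exact absurd rfl h
    | succ k ih =>
      intro h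
      by_cases hk : seq k u = seq 0 u
      · exact ⟨k, Nat.lt_succ_self k, fun heq => h (heq.symm.trans hk)⟩
      · obtain ⟨j, hj, hne⟩ := ih hk
        exact ⟨j, Nat.lt_succ_of_lt hj, hne⟩
  -- Step 1: every guard set keeps an unchanged vertex
  have hguard : ∀ m : Fin (n + t + 1), ∃ s₀ : Fin (2*t + 2*t^2),
      ∀ i ≤ ℓ, seq i (GV.c m s₀) = m.val + 1 := by
    intro m
    by_contra hcon
    push_neg at hcon
    have hF : ∀ s₀ : Fin (2*t + 2*t^2),
        ∃ j, j < ℓ ∧ seq j (GV.c m s₀) ≠ seq (j+1) (GV.c m s₀) := by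
      intro s₀
      obtain ⟨i, hi, hne⟩ := hcon s₀
      have h0' : seq 0 (GV.c m s₀) = m.val + 1 := by rw [h0]; rfl
      obtain ⟨j, hj, hne'⟩ := hfd _ i (fun hh => hne (hh.trans h0'))
      exact ⟨j, lt_of_lt_of_le hj hi, hne'⟩
    choose F hFlt hFne using hF
    have hb0 : (0 : ℕ) < t := by omega
    have hb1 : (1 : ℕ) < t := by omega
    set vb : GV n t := GV.b ⟨0, hb0⟩ ⟨1, hb1⟩ with hvb
    have hbne : seq ℓ vb ≠ seq 0 vb := by
      rw [h0, hLfin, hvb]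
      show Wbeta n t _ ≠ Walpha n t _
      simp only [Wbeta, Walpha]
      omega
    obtain ⟨jb, hjb, hjbne⟩ := hfd _ ℓ hbne
    have hinj : Set.InjOn F ↑(Finset.univ : Finset (Fin (2*t + 2*t^2))) := by
      intro a _ b _ hab
      have := hstep (F a) (hFlt a) (GV.c m a) (GV.c m b) (hFne a)
        (by rw [hab]; exact hFne b)
      simpa using this
    have hnotmem : jb ∉ Finset.image F Finset.univ := by
      intro hmem
      obtain ⟨s₀, _, hs⟩ := Finset.mem_image.1 hmem
      have heq := hstep jb hjb (GV.c m s₀) vb (by rw [← hs]; exact hFne s₀) hjbne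
      rw [hvb] at heq
      cases heq
    have hsub : insert jb (Finset.image F Finset.univ) ⊆ Finset.range ℓ := by
      intro j hj
      rcases Finset.mem_insert.1 hj with rfl | hj
      · exact Finset.mem_range.2 hjb
      · obtain ⟨s₀, _, rfl⟩ := Finset.mem_image.1 hj
        exact Finset.mem_range.2 (hFlt s₀)
    have hcard := Finset.card_le_card hsub
    rw [Finset.card_insert_of_notMem hnotmem, Finset.card_image_of_injOn hinj,
      Finset.card_univ, Fintype.card_fin, Finset.card_range] at hcard
    exact Nat.not_succ_le_self _ (le_trans (by omega : (2*t + 2*t^2) + 1 ≤ ℓ) hℓ)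
  choose guard hguardspec using hguard
  -- Step 2: color dichotomy for the g vertices
  have hg2 : ∀ i ≤ ℓ, ∀ p : Fin n,
      seq i (GV.g p) = p.val + 1 ∨ seq i (GV.g p) = n + t + 1 := by
    intro i hi p
    have hrange := (hcol i hi).1 (GV.g p)
    rw [Finset.mem_Icc] at hrange
    by_contra hc
    push_neg at hc
    have hc1 : seq i (GV.g p) - 1 < n + t + 1 := by omega
    set m : Fin (n+t+1) := ⟨seq i (GV.g p) - 1, hc1⟩ with hm
    have hadj : (Wgraph n t G).Adj (GV.g p) (GV.c m (guard m)) := by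
      refine ⟨?_, ?_⟩ <;> · show seq i (GV.g p) - 1 ≠ _; omega
    have hne := (hcol i hi).2 _ _ hadj
    rw [hguardspec m i hi] at hne
    have : m.val = seq i (GV.g p) - 1 := rfl
    omega
  -- Step 3: b vertices use colors in [1, n+t]
  have hg3 : ∀ i ≤ ℓ, ∀ u w : Fin t, seq i (GV.b u w) ∈ Finset.Icc 1 (n + t) := by
    intro i hi u w
    have hrange := (hcol i hi).1 (GV.b u w)
    rw [Finset.mem_Icc] at hrange
    have hmN : n + t < n + t + 1 := by omega
    have hadj : (Wgraph n t G).Adj (GV.b u w) (GV.c ⟨n+t, hmN⟩ (guard ⟨n+t, hmN⟩)) := by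
      show (⟨n+t, hmN⟩ : Fin (n+t+1)).val = n + t
      rfl
    have hne := (hcol i hi).2 _ _ hadj
    rw [hguardspec ⟨n+t, hmN⟩ i hi] at hne
    have : (⟨n+t, hmN⟩ : Fin (n+t+1)).val = n + t := rfl
    rw [Finset.mem_Icc]
    omega
  -- Step 4: apply the key lemma to the restriction of the sequence to V_B
  set γ : ℕ → Fin t × Fin t → ℕ := fun i p => seq i (GV.b p.1 p.2) with hγ
  have hkey : ∃ i ≤ ℓ, t - 1 ≤ (Stmt8Aux.Lows n t (γ i)).card := by
    apply Stmt8Aux.key_lemma ht2 ℓ γ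
    · intro i hi p q hp hq
      exact (hcol i hi).2 (GV.b p.1 p.2) (GV.b q.1 q.2) ⟨hp, hq⟩
    · intro i hi p
      exact hg3 i hi p.1 p.2
    · intro i hi p q hp hq
      have := hstep i hi (GV.b p.1 p.2) (GV.b q.1 q.2) hp hq
      injection this with h1 h2
      exact Prod.ext h1 h2
    · intro p
      rw [hγ]
      show seq 0 (GV.b p.1 p.2) = _
      rw [h0]
      rfl
    · intro p
      rw [hγ]
      show seq ℓ (GV.b p.1 p.2) = _
      rw [hLfin]
      rfl
  obtain ⟨τ, hτ, hlowcard⟩ := hkey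
  -- Step 5: extract the independent set
  refine ⟨Finset.univ.filter (fun p : Fin n => seq τ (GV.g p) = n + t + 1), ?_, ?_⟩
  · -- cardinality
    set Sfin := Finset.univ.filter (fun p : Fin n => seq τ (GV.g p) = n + t + 1) with hS
    have hmap : ∀ c ∈ Stmt8Aux.Lows n t (γ τ), c - 1 ∈ Sfin.image Fin.val := by
      intro c hc
      obtain ⟨hcI, p, hp⟩ := Finset.mem_filter.1 hc
      rw [Finset.mem_Icc] at hcI
      have hcn : c - 1 < n := by omega
      rcases hg2 τ hτ ⟨c-1, hcn⟩ with h | h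
      · exfalso
        have hadj : (Wgraph n t G).Adj (GV.g ⟨c-1, hcn⟩) (GV.b p.1 p.2) := trivial
        have hne := (hcol τ hτ).2 _ _ hadj
        rw [h] at hne
        have hp' : seq τ (GV.b p.1 p.2) = c := hp
        rw [hp'] at hne
        have : (⟨c-1, hcn⟩ : Fin n).val = c - 1 := rfl
        omega
      · exact Finset.mem_image.2 ⟨⟨c-1, hcn⟩,
          Finset.mem_filter.2 ⟨Finset.mem_univ _, h⟩, rfl⟩
    have hinj : Set.InjOn (fun c => c - 1) ↑(Stmt8Aux.Lows n t (γ τ)) := by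
      intro a ha b hb hab
      have ha' := Finset.mem_Icc.1 (Finset.mem_filter.1 (Finset.mem_coe.1 ha)).1
      have hb' := Finset.mem_Icc.1 (Finset.mem_filter.1 (Finset.mem_coe.1 hb)).1
      have : a - 1 = b - 1 := hab
      omega
    have h1 := Finset.card_le_card_of_injOn _ hmap hinj
    have h2 : (Sfin.image Fin.val).card ≤ Sfin.card := Finset.card_image_le
    omega
  · intro u hu v hv hadj
    have hu' := (Finset.mem_filter.1 hu).2
    have hv' := (Finset.mem_filter.1 hv).2
    have hadj' : (Wgraph n t G).Adj (GV.g u) (GV.g v) := hadj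
    have hne := (hcol τ hτ).2 _ _ hadj'
    rw [hu', hv'] at hne
    exact hne rfl
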